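/- Fix an integer n ≥ 3. For each real d with 0 < d < n define G_d : [0, ∞) → ℝ by G_d(r) = (Γ((n−1)/2) / (√π · Γ((n−2)/2))) · ∫_0^{arccos(√(n d/(n−d)) / r)} sin^{n−3}(φ) dφ for r > √(n d/(n−d)), and G_d(r) = 0 otherwise. Let A_1, …, A_{n−1} be nonnegative reals with Σ_{d=1}^{n−1} A_d ≥ 3 and at least one A_d > 0, and define f_s(r) = Σ_{d=1}^{n−1} A_d G_d(r). Then f_s is continuous and nondecreasing on [0, ∞), and there exists a unique r₁ > 0 such that f_s(r₁) = 1. -/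

import Mathlib

open Real Set

lemma wallis17 (k : ℕ) :
    (∫ x in (0:ℝ)..(π/2), Real.sin x ^ k)
      = Real.sqrt π * Real.Gamma (((k:ℝ)+1)/2) / (2 * Real.Gamma ((k:ℝ)/2 + 1)) := by
  induction k using Nat.twoStepInduction with
  | zero =>
      have h : Real.Gamma (2⁻¹ : ℝ) = Real.sqrt π := by
        rw [show (2⁻¹:ℝ) = 1/2 by norm_num, Real.Gamma_one_half_eq]
      simp [h]
      rw [Real.mul_self_sqrt pi_pos.le]
  | one =>
      have h32 : Real.Gamma ((1:ℝ)/2 + 1) = (1/2) * Real.sqrt π := by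
        rw [Real.Gamma_add_one (by norm_num), Real.Gamma_one_half_eq]
      have hπ : Real.sqrt π ≠ 0 := (Real.sqrt_pos.mpr pi_pos).ne'
      simp only [Nat.cast_one]
      rw [show ((1:ℝ)+1)/2 = 1 by norm_num, Real.Gamma_one, h32]
      simp only [pow_one, integral_sin, Real.cos_zero, Real.cos_pi_div_two]
      field_simp
      norm_num
  | more k ih _ =>
      have hk1 : (0:ℝ) < ((k:ℝ)+1)/2 := by positivity
      have hk2 : (0:ℝ) < (k:ℝ)/2 + 1 := by positivity
      have ha := (Real.Gamma_pos_of_pos hk1).ne'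
      have hb := (Real.Gamma_pos_of_pos hk2).ne'
      have e1 : Real.Gamma (((k:ℝ)+2+1)/2) = (((k:ℝ)+1)/2) * Real.Gamma (((k:ℝ)+1)/2) := by
        rw [show ((k:ℝ)+2+1)/2 = ((k:ℝ)+1)/2 + 1 by ring, Real.Gamma_add_one hk1.ne']
      have e2 : Real.Gamma (((k:ℝ)+2)/2 + 1) = ((k:ℝ)/2+1) * Real.Gamma ((k:ℝ)/2+1) := by
        rw [show ((k:ℝ)+2)/2 + 1 = ((k:ℝ)/2+1) + 1 by ring, Real.Gamma_add_one hk2.ne']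
      rw [integral_sin_pow, ih]
      push_cast
      rw [e1, e2]
      rw [Real.sin_zero, Real.cos_pi_div_two, Real.sin_pi_div_two]
      field_simp
      ring

/-- The conditional union bound (21) of the tangential-sphere bound of Poltyrev,
`f_s(r) = Σ_d A_d G_d(r)`, is continuous and nondecreasing on `[0, ∞)` and has a
unique root `r₁ > 0` of `f_s(r) = 1` (equation (22)). -/
theorem stmt17
    (n : ℕ) (hn : 3 ≤ n)
    (G : ℝ → ℝ → ℝ)
    (hG : ∀ d : ℝ, 0 < d → d < n → ∀ r : ℝ,
      Real.sqrt ((n : ℝ) * d / ((n : ℝ) - d)) < r →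
      G d r = (Real.Gamma (((n : ℝ) - 1) / 2) /
          (Real.sqrt π * Real.Gamma (((n : ℝ) - 2) / 2))) *
        ∫ φ in (0 : ℝ)..Real.arccos (Real.sqrt ((n : ℝ) * d / ((n : ℝ) - d)) / r),
          (Real.sin φ) ^ (n - 3))
    (hG0 : ∀ d : ℝ, 0 < d → d < n → ∀ r : ℝ, 0 ≤ r →
      r ≤ Real.sqrt ((n : ℝ) * d / ((n : ℝ) - d)) → G d r = 0)
    (A : ℕ → ℝ) (hA0 : ∀ d, 0 ≤ A d)
    (hAsum : 3 ≤ ∑ d ∈ Finset.Icc 1 (n - 1), A d)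
    (hApos : ∃ d ∈ Finset.Icc 1 (n - 1), 0 < A d)
    (f_s : ℝ → ℝ) (hfs : ∀ r, f_s r = ∑ d ∈ Finset.Icc 1 (n - 1), A d * G (d : ℝ) r) :
    ContinuousOn f_s (Ici 0) ∧ MonotoneOn f_s (Ici 0) ∧
      ∃! r₁ : ℝ, 0 < r₁ ∧ f_s r₁ = 1 := by
  have hn3 : (3:ℝ) ≤ (n:ℝ) := by exact_mod_cast hn
  set τ : ℕ := n - 3 with hτ
  set C : ℝ := Real.Gamma (((n:ℝ)-1)/2) / (Real.sqrt π * Real.Gamma (((n:ℝ)-2)/2)) with hC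
  have hπ : (0:ℝ) < Real.sqrt π := Real.sqrt_pos.mpr pi_pos
  have hΓ1 : (0:ℝ) < Real.Gamma (((n:ℝ)-1)/2) := Real.Gamma_pos_of_pos (by linarith)
  have hΓ2 : (0:ℝ) < Real.Gamma (((n:ℝ)-2)/2) := Real.Gamma_pos_of_pos (by linarith)
  have hCpos : 0 < C := div_pos hΓ1 (mul_pos hπ hΓ2)
  -- the primitive F
  set F : ℝ → ℝ := fun x => ∫ φ in (0:ℝ)..x, Real.sin φ ^ τ with hF
  have hint : ∀ a b : ℝ, IntervalIntegrable (fun φ => Real.sin φ ^ τ) MeasureTheory.volume a b :=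
    fun a b => (Real.continuous_sin.pow τ).intervalIntegrable a b
  have hFcont : Continuous F := intervalIntegral.continuous_primitive hint 0
  have hF0 : F 0 = 0 := intervalIntegral.integral_same
  have hFdiff : ∀ x y : ℝ, F y - F x = ∫ φ in x..y, Real.sin φ ^ τ := by
    intro x y
    have := intervalIntegral.integral_add_adjacent_intervals (hint 0 x) (hint x y)
    simp only [hF]
    linarith [this]
  have hFmono : ∀ x y : ℝ, 0 ≤ x → x ≤ y → y ≤ π/2 → F x ≤ F y := by
    intro x y hx hxy hy
    have h2 : (0:ℝ) ≤ ∫ φ in x..y, Real.sin φ ^ τ := by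
      apply intervalIntegral.integral_nonneg hxy
      intro u hu
      have : 0 ≤ Real.sin u := Real.sin_nonneg_of_nonneg_of_le_pi (le_trans hx hu.1)
        (le_trans hu.2 (by linarith [pi_pos]))
      positivity
    have := hFdiff x y; linarith
  have hFstrict : ∀ x y : ℝ, 0 ≤ x → x < y → y ≤ π/2 → F x < F y := by
    intro x y hx hxy hy
    have h2 : (0:ℝ) < ∫ φ in x..y, Real.sin φ ^ τ := by
      apply intervalIntegral.intervalIntegral_pos_of_pos_on (hint x y) _ hxy
      intro u hu
      have hs : 0 < Real.sin u := Real.sin_pos_of_pos_of_lt_pi (lt_of_le_of_lt hx hu.1)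
        (lt_of_lt_of_le hu.2 (by linarith [pi_pos]))
      positivity
    have := hFdiff x y; linarith
  -- the thresholds
  set s : ℕ → ℝ := fun d => Real.sqrt ((n:ℝ) * d / ((n:ℝ) - d)) with hs
  have hd_mem : ∀ d ∈ Finset.Icc 1 (n-1), 0 < (d:ℝ) ∧ (d:ℝ) < (n:ℝ) ∧ 0 < s d := by
    intro d hd
    rw [Finset.mem_Icc] at hd
    have h1 : (1:ℝ) ≤ (d:ℝ) := by exact_mod_cast hd.1
    have h2 : (d:ℝ) ≤ (n:ℝ) - 1 := by
      have : (d:ℝ) ≤ ((n-1 : ℕ):ℝ) := by exact_mod_cast hd.2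
      rwa [Nat.cast_sub (by omega), Nat.cast_one] at this
    refine ⟨by linarith, by linarith, Real.sqrt_pos.mpr ?_⟩
    apply div_pos (by positivity) (by linarith)
  -- the continuous version g of G
  set g : ℕ → ℝ → ℝ := fun d r => C * F (Real.arccos (s d / max r (s d))) with hg
  have harg : ∀ d ∈ Finset.Icc 1 (n-1), ∀ r : ℝ, 0 < s d / max r (s d) ∧ s d / max r (s d) ≤ 1 := by
    intro d hd r
    obtain ⟨-, -, hsd⟩ := hd_mem d hd
    have hm : 0 < max r (s d) := lt_of_lt_of_le hsd (le_max_right _ _)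
    exact ⟨div_pos hsd hm, div_le_one_of_le₀ (le_max_right _ _) hm.le⟩
  have hrange : ∀ d ∈ Finset.Icc 1 (n-1), ∀ r : ℝ,
      0 ≤ Real.arccos (s d / max r (s d)) ∧ Real.arccos (s d / max r (s d)) ≤ π/2 := by
    intro d hd r
    exact ⟨Real.arccos_nonneg _, Real.arccos_le_pi_div_two.mpr (harg d hd r).1.le⟩
  have hGg : ∀ d ∈ Finset.Icc 1 (n-1), ∀ r : ℝ, 0 ≤ r → G (d:ℝ) r = g d r := by
    intro d hd r hr
    obtain ⟨hd0, hdn, hsd⟩ := hd_mem d hd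
    rcases le_or_gt r (s d) with h | h
    · rw [hG0 (d:ℝ) hd0 hdn r hr h]
      simp only [hg]
      rw [max_eq_right h, div_self hsd.ne', Real.arccos_one, hF0, mul_zero]
    · rw [hG (d:ℝ) hd0 hdn r h]
      simp only [hg]
      rw [max_eq_left h.le]
  have hgcont : ∀ d ∈ Finset.Icc 1 (n-1), Continuous (g d) := by
    intro d hd
    obtain ⟨-, -, hsd⟩ := hd_mem d hd
    apply continuous_const.mul
    apply hFcont.comp
    apply Real.continuous_arccos.comp
    apply continuous_const.div (continuous_id.max continuous_const)
    intro r
    exact (lt_of_lt_of_le hsd (le_max_right _ _)).ne'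
  have hgmono : ∀ d ∈ Finset.Icc 1 (n-1), Monotone (g d) := by
    intro d hd a b hab
    obtain ⟨-, -, hsd⟩ := hd_mem d hd
    simp only [hg]
    have hma : 0 < max a (s d) := lt_of_lt_of_le hsd (le_max_right _ _)
    have hdiv : s d / max b (s d) ≤ s d / max a (s d) :=
      div_le_div_of_nonneg_left hsd.le hma (max_le_max hab le_rfl)
    have harc : Real.arccos (s d / max a (s d)) ≤ Real.arccos (s d / max b (s d)) := by
      rw [Real.arccos_eq_pi_div_two_sub_arcsin, Real.arccos_eq_pi_div_two_sub_arcsin]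
      have := Real.monotone_arcsin hdiv
      linarith
    exact mul_le_mul_of_nonneg_left
      (hFmono _ _ (hrange d hd a).1 harc (hrange d hd b).2) hCpos.le
  -- f_s agrees with the continuous sum on [0,∞)
  set Fs : ℝ → ℝ := fun r => ∑ d ∈ Finset.Icc 1 (n-1), A d * g d r with hFs
  have hfsFs : ∀ r : ℝ, 0 ≤ r → f_s r = Fs r := by
    intro r hr
    rw [hfs]
    exact Finset.sum_congr rfl fun d hd => by rw [hGg d hd r hr]
  have hFscont : Continuous Fs := by
    apply continuous_finset_sum
    intro d hd
    exact continuous_const.mul (hgcont d hd)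
  have hFsmono : Monotone Fs := by
    intro a b hab
    apply Finset.sum_le_sum
    intro d hd
    exact mul_le_mul_of_nonneg_left (hgmono d hd hab) (hA0 d)
  have hcont : ContinuousOn f_s (Ici 0) :=
    (hFscont.continuousOn).congr fun r hr => hfsFs r hr
  have hmono : MonotoneOn f_s (Ici 0) := by
    intro a ha b hb hab
    rw [hfsFs a ha, hfsFs b hb]; exact hFsmono hab
  refine ⟨hcont, hmono, ?_⟩
  -- value at 0 is 0
  have hfs0 : f_s 0 = 0 := by
    rw [hfs]
    apply Finset.sum_eq_zero
    intro d hd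
    obtain ⟨hd0, hdn, hsd⟩ := hd_mem d hd
    rw [hG0 (d:ℝ) hd0 hdn 0 le_rfl (Real.sqrt_nonneg _), mul_zero]
  -- nonnegativity of g
  have hgnonneg : ∀ d ∈ Finset.Icc 1 (n-1), ∀ r : ℝ, 0 ≤ g d r := by
    intro d hd r
    have h0 : F 0 ≤ F (Real.arccos (s d / max r (s d))) :=
      hFmono 0 _ le_rfl (hrange d hd r).1 (hrange d hd r).2
    rw [hF0] at h0
    exact mul_nonneg hCpos.le h0
  -- the Wallis value
  have hCW : C * F (π/2) = 1/2 := by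
    have hτc : (τ:ℝ) = (n:ℝ) - 3 := by
      rw [hτ, Nat.cast_sub hn]; norm_num
    have hτeq : ((τ:ℝ)+1)/2 = ((n:ℝ)-2)/2 := by rw [hτc]; ring
    have hτeq2 : (τ:ℝ)/2 + 1 = ((n:ℝ)-1)/2 := by rw [hτc]; ring
    have hW : F (π/2)
        = Real.sqrt π * Real.Gamma (((n:ℝ)-2)/2) / (2 * Real.Gamma (((n:ℝ)-1)/2)) := by
      show (∫ φ in (0:ℝ)..(π/2), Real.sin φ ^ τ) = _
      rw [wallis17 τ, hτeq, hτeq2]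
    rw [hW, hC]
    field_simp
  -- limits at infinity
  have hglim : ∀ d ∈ Finset.Icc 1 (n-1),
      Filter.Tendsto (g d) Filter.atTop (nhds (1/2)) := by
    intro d hd
    have hmax : Filter.Tendsto (fun r : ℝ => max r (s d)) Filter.atTop Filter.atTop :=
      Filter.tendsto_atTop_mono (fun r => le_max_left r (s d)) Filter.tendsto_id
    have hdiv : Filter.Tendsto (fun r : ℝ => s d / max r (s d)) Filter.atTop (nhds 0) :=
      Filter.Tendsto.div_atTop tendsto_const_nhds hmax
    have harc : Filter.Tendsto (fun r : ℝ => Real.arccos (s d / max r (s d)))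
        Filter.atTop (nhds (π/2)) := by
      have := (Real.continuous_arccos.tendsto 0).comp hdiv
      rwa [Real.arccos_zero] at this
    have hcomp : Filter.Tendsto (fun r : ℝ => C * F (Real.arccos (s d / max r (s d))))
        Filter.atTop (nhds (C * F (π/2))) :=
      (((continuous_const.mul hFcont).tendsto (π/2)).comp harc : _)
    rw [hCW] at hcomp
    exact hcomp
  have hFslim : Filter.Tendsto Fs Filter.atTop
      (nhds (∑ d ∈ Finset.Icc 1 (n-1), A d * (1/2))) := by
    apply tendsto_finset_sum
    intro d hd
    exact (hglim d hd).const_mul (A d)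
  have hL : (1:ℝ) < ∑ d ∈ Finset.Icc 1 (n-1), A d * (1/2) := by
    rw [← Finset.sum_mul]
    linarith
  -- a point where Fs exceeds 1
  obtain ⟨R, hR1, hR0⟩ :=
    ((hFslim.eventually (eventually_gt_nhds hL)).and (Filter.eventually_ge_atTop (0:ℝ))).exists
  have hfsR : 1 < f_s R := by rw [hfsFs R hR0]; exact hR1
  -- existence via IVT
  have hIcc : Icc (0:ℝ) R ⊆ Ici 0 := Icc_subset_Ici_self
  obtain ⟨r₁, hr₁mem, hr₁⟩ := intermediate_value_Icc hR0 (hcont.mono hIcc)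
    (by rw [hfs0]; exact ⟨by norm_num, hfsR.le⟩)
  have hr₁pos : 0 < r₁ := by
    rcases hr₁mem.1.lt_or_eq with h | h
    · exact h
    · exfalso; rw [← h] at hr₁; rw [hfs0] at hr₁; norm_num at hr₁
  -- strict increase past any root (key for uniqueness)
  have key : ∀ a b : ℝ, 0 < a → a < b → f_s a = 1 → f_s b ≠ 1 := by
    intro a b ha hab hfa
    have hb0 : (0:ℝ) ≤ b := by linarith
    have hFsa : Fs a = 1 := by rw [← hfsFs a ha.le]; exact hfa
    have hsum_ne : (∑ d ∈ Finset.Icc 1 (n-1), A d * g d a) ≠ 0 := by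
      have heq : Fs a = ∑ d ∈ Finset.Icc 1 (n-1), A d * g d a := rfl
      rw [← heq, hFsa]; norm_num
    obtain ⟨d₀, hd₀mem, hd₀ne⟩ := Finset.exists_ne_zero_of_sum_ne_zero hsum_ne
    obtain ⟨-, -, hsd₀⟩ := hd_mem d₀ hd₀mem
    have hA₀ : 0 < A d₀ := by
      rcases (hA0 d₀).lt_or_eq with h | h
      · exact h
      · exfalso; rw [← h, zero_mul] at hd₀ne; exact hd₀ne rfl
    have hg₀pos : 0 < g d₀ a := by
      rcases (hgnonneg d₀ hd₀mem a).lt_or_eq with h | h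
      · exact h
      · exfalso; rw [← h, mul_zero] at hd₀ne; exact hd₀ne rfl
    -- a must be past the threshold
    have hsa : s d₀ < a := by
      by_contra h
      push_neg at h
      have : g d₀ a = 0 := by
        simp only [hg]
        rw [max_eq_right h, div_self hsd₀.ne', Real.arccos_one, hF0, mul_zero]
      rw [this] at hg₀pos; exact lt_irrefl _ hg₀pos
    -- strict increase of the d₀ term
    have hglt : g d₀ a < g d₀ b := by
      simp only [hg]
      rw [max_eq_left hsa.le, max_eq_left (by linarith : s d₀ ≤ b)]
      have hqa : s d₀ / a ≤ 1 := div_le_one_of_le₀ hsa.le ha.le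
      have hqb0 : 0 < s d₀ / b := div_pos hsd₀ (by linarith)
      have hqlt : s d₀ / b < s d₀ / a := div_lt_div_of_pos_left hsd₀ ha hab
      have harc : Real.arccos (s d₀ / a) < Real.arccos (s d₀ / b) :=
        Real.strictAntiOn_arccos ⟨by linarith, by linarith⟩ ⟨by linarith [div_pos hsd₀ ha], hqa⟩ hqlt
      have hbr : Real.arccos (s d₀ / b) ≤ π/2 :=
        Real.arccos_le_pi_div_two.mpr hqb0.le
      exact mul_lt_mul_of_pos_left
        (hFstrict _ _ (Real.arccos_nonneg _) harc hbr) hCpos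
    have hlt : Fs a < Fs b := by
      apply Finset.sum_lt_sum
      · intro d hd
        exact mul_le_mul_of_nonneg_left (hgmono d hd hab.le) (hA0 d)
      · exact ⟨d₀, hd₀mem, mul_lt_mul_of_pos_left hglt hA₀⟩
    rw [hfsFs b hb0]
    rw [hFsa] at hlt
    exact (ne_of_gt hlt)
  refine ⟨r₁, ⟨hr₁pos, hr₁⟩, ?_⟩
  intro y hy
  rcases lt_trichotomy y r₁ with h | h | h
  · exact absurd hr₁ (key y r₁ hy.1 h hy.2)
  · exact h
  · exact absurd hy.2 (key r₁ y hr₁pos h hr₁)
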